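/- arXiv:math/0701300 — 2 statements merged into one kernel-verified Lean document; each statement's English description precedes it below -/
import Mathlib

section
/- Let θ be irrational and M a positive integer. Write the outgoing partition P^out_θ(M) = (b₁,…,b_l). Then ∑_{j=1}^l ⌊bⱼθ⌋ = ⌊Mθ⌋. -/
open scoped Classical
open Finset

/-- The next (largest) entry of the incoming partition: the largest `a ∈ {1,…,M}`
such that `⌈aθ⌉/a < ⌈a'θ⌉/a'` for all `a' ∈ {1,…,a−1}`. -/
noncomputable def pinStep (θ : ℝ) (M : ℕ) : ℕ :=
  WithBot.unbotD 0 ((Finset.Icc 1 M).filter (fun a : ℕ => ∀ a' ∈ Finset.Ico 1 a,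
      ((⌈(a : ℝ) * θ⌉ : ℤ) : ℝ) / (a : ℝ) < ((⌈(a' : ℝ) * θ⌉ : ℤ) : ℝ) / (a' : ℝ))).max

/-- Fuel-based recursion computing the incoming partition `P^in_θ(M)`. -/
noncomputable def pinListAux (θ : ℝ) : ℕ → ℕ → List ℕ
  | 0, _ => []
  | fuel + 1, M =>
      if M = 0 then [] else pinStep θ M :: pinListAux θ fuel (M - pinStep θ M)

/-- The incoming partition `P^in_θ(M)`, listed in the order produced by the recursion
(which is nonincreasing). -/
noncomputable def pinList (θ : ℝ) (M : ℕ) : List ℕ := pinListAux θ M M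

/-- The outgoing partition `P^out_θ(M) := P^in_{−θ}(M)`. -/
noncomputable def poutList (θ : ℝ) (M : ℕ) : List ℕ := pinList (-θ) M

noncomputable def gfun (φ : ℝ) (a : ℕ) : ℝ := ((⌈(a : ℝ) * φ⌉ : ℤ) : ℝ) / (a : ℝ)

lemma pinStep_spec (φ : ℝ) (M : ℕ) (hM : 1 ≤ M) :
    pinStep φ M ∈ Finset.Icc 1 M ∧
      ∀ b ∈ Finset.Icc 1 M, gfun φ (pinStep φ M) ≤ gfun φ b := by
  classical
  set S := @Finset.filter ℕ (fun a : ℕ => ∀ a' ∈ Finset.Ico 1 a,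
      ((⌈(a : ℝ) * φ⌉ : ℤ) : ℝ) / (a : ℝ) < ((⌈(a' : ℝ) * φ⌉ : ℤ) : ℝ) / (a' : ℝ))
      (fun a => Classical.propDecidable _) (Finset.Icc 1 M) with hSdef
  have hmem : ∀ x : ℕ, x ∈ S ↔ (x ∈ Finset.Icc 1 M ∧
      ∀ a' ∈ Finset.Ico 1 x, gfun φ x < gfun φ a') := by
    intro x
    simp only [hSdef, Finset.mem_filter, gfun]
  have h1 : (1 : ℕ) ∈ S := by
    rw [hmem]
    refine ⟨Finset.mem_Icc.2 ⟨le_refl 1, hM⟩, ?_⟩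
    intro a' ha'
    rw [Finset.mem_Ico] at ha'
    omega
  have hS : S.Nonempty := ⟨1, h1⟩
  have hmax : pinStep φ M = S.max' hS := by
    rw [pinStep, ← hSdef, ← Finset.coe_max' hS]
    rfl
  set a := S.max' hS with ha
  have haS : a ∈ S := S.max'_mem hS
  have haI : a ∈ Finset.Icc 1 M := ((hmem a).1 haS).1
  have haRec : ∀ a' ∈ Finset.Ico 1 a, gfun φ a < gfun φ a' := ((hmem a).1 haS).2
  refine hmax ▸ ⟨haI, ?_⟩
  by_contra hcon
  push_neg at hcon
  obtain ⟨b₀, hb₀I, hb₀⟩ := hcon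
  set T := (Finset.Icc 1 M).filter (fun b => gfun φ b < gfun φ a) with hTdef
  have hT : T.Nonempty := ⟨b₀, Finset.mem_filter.2 ⟨hb₀I, hb₀⟩⟩
  set b := T.min' hT with hb
  have hbT : b ∈ T := T.min'_mem hT
  have hbI : b ∈ Finset.Icc 1 M := (Finset.mem_filter.1 hbT).1
  have hblt : gfun φ b < gfun φ a := (Finset.mem_filter.1 hbT).2
  have hab : a < b := by
    rcases lt_trichotomy b a with h | h | h
    · exact absurd (haRec b (Finset.mem_Ico.2 ⟨(Finset.mem_Icc.1 hbI).1, h⟩)) (lt_asymm hblt)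
    · exact absurd (h ▸ hblt) (lt_irrefl _)
    · exact h
  have hbS : b ∈ S := by
    rw [hmem]
    refine ⟨hbI, fun a' ha' => ?_⟩
    rw [Finset.mem_Ico] at ha'
    rcases lt_trichotomy a' a with h | h | h
    · exact hblt.trans (haRec a' (Finset.mem_Ico.2 ⟨ha'.1, h⟩))
    · exact h ▸ hblt
    · -- a < a' < b, so a' ∉ T
      have ha'I : a' ∈ Finset.Icc 1 M :=
        Finset.mem_Icc.2 ⟨ha'.1, le_trans (le_of_lt ha'.2) (Finset.mem_Icc.1 hbI).2⟩
      have : a' ∉ T := fun hmem => absurd (T.min'_le a' hmem) (not_le.2 ha'.2)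
      have hge : gfun φ a ≤ gfun φ a' := by
        by_contra hx
        exact this (Finset.mem_filter.2 ⟨ha'I, lt_of_not_ge hx⟩)
      exact hblt.trans_le hge
  exact absurd (S.le_max' b hbS) (not_le.2 hab)

lemma irr_lt_ceil {x : ℝ} (hx : Irrational x) : x < (⌈x⌉ : ℝ) := by
  rcases lt_or_eq_of_le (Int.le_ceil x) with h | h
  · exact h
  · exact absurd h (hx.ne_int ⌈x⌉)

lemma ceil_split (φ : ℝ) (hφ : Irrational φ) (M : ℕ) (hM : 1 ≤ M) :
    ⌈(M : ℝ) * φ⌉ = ⌈((pinStep φ M : ℕ) : ℝ) * φ⌉ + ⌈((M - pinStep φ M : ℕ) : ℝ) * φ⌉ := by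
  obtain ⟨haI, hmin⟩ := pinStep_spec φ M hM
  set a := pinStep φ M with ha
  rw [Finset.mem_Icc] at haI
  rcases eq_or_lt_of_le haI.2 with heq | hlt
  · rw [heq]; simp
  -- k = M - a ≥ 1
  set k := M - a with hk
  have hk1 : 1 ≤ k := by omega
  have hMak : (M : ℝ) = (a : ℝ) + (k : ℝ) := by
    have : M = a + k := by omega
    rw [this]; push_cast; ring
  have ha0 : (0 : ℝ) < a := by exact_mod_cast haI.1
  have hk0 : (0 : ℝ) < k := by exact_mod_cast hk1
  have hM0 : (0 : ℝ) < M := by positivity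
  have hirr : ∀ n : ℕ, 1 ≤ n → Irrational ((n : ℝ) * φ) := fun n hn =>
    hφ.natCast_mul (by omega)
  have hca := irr_lt_ceil (hirr a haI.1)
  have hck := irr_lt_ceil (hirr k hk1)
  have hcm := irr_lt_ceil (hirr M hM)
  have hca' := Int.ceil_lt_add_one ((a : ℝ) * φ)
  have hck' := Int.ceil_lt_add_one ((k : ℝ) * φ)
  have hcm' := Int.ceil_lt_add_one ((M : ℝ) * φ)
  -- the integer n = ⌈aφ⌉+⌈kφ⌉-⌈Mφ⌉ is 0 or 1
  have hsum : (M : ℝ) * φ = (a : ℝ) * φ + (k : ℝ) * φ := by rw [hMak]; ring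
  have hn0 : ⌈(M : ℝ) * φ⌉ ≤ ⌈((a : ℕ) : ℝ) * φ⌉ + ⌈((k : ℕ) : ℝ) * φ⌉ := by
    rw [hsum]; exact Int.ceil_add_le _ _
  have hn1 : ⌈((a : ℕ) : ℝ) * φ⌉ + ⌈((k : ℕ) : ℝ) * φ⌉ ≤ ⌈(M : ℝ) * φ⌉ + 1 := by
    have : ((⌈((a:ℕ) : ℝ) * φ⌉ : ℤ) : ℝ) + (⌈((k:ℕ) : ℝ) * φ⌉ : ℝ) < (M : ℝ) * φ + 2 := by
      rw [hsum]; linarith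
    have h2 : ((⌈((a:ℕ) : ℝ) * φ⌉ + ⌈((k:ℕ) : ℝ) * φ⌉ : ℤ) : ℝ) < ((⌈(M : ℝ) * φ⌉ : ℤ) : ℝ) + 2 := by
      push_cast; linarith [Int.le_ceil ((M : ℝ) * φ)]
    have h3 : ⌈((a:ℕ) : ℝ) * φ⌉ + ⌈((k:ℕ) : ℝ) * φ⌉ < ⌈(M : ℝ) * φ⌉ + 2 := by
      exact_mod_cast h2
    omega
  rcases eq_or_lt_of_le hn0 with heq2 | hlt2
  · exact heq2.symm ▸ heq2
  · exfalso
    have heq1 : ⌈((a:ℕ) : ℝ) * φ⌉ + ⌈((k:ℕ) : ℝ) * φ⌉ = ⌈(M : ℝ) * φ⌉ + 1 := le_antisymm hn1 (by omega)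
    -- use minimality: g a ≤ g M
    have hgM : gfun φ a ≤ gfun φ M := hmin M (Finset.mem_Icc.2 ⟨hM, le_refl M⟩)
    rw [gfun, gfun, div_le_div_iff₀ ha0 hM0] at hgM
    -- M * ca ≤ a * cM = a*(ca + ck - 1)
    have hcMval : ((⌈(M : ℝ) * φ⌉ : ℤ) : ℝ) = (⌈((a:ℕ) : ℝ) * φ⌉ : ℝ) + (⌈((k:ℕ) : ℝ) * φ⌉ : ℝ) - 1 := by
      have : ((⌈((a:ℕ) : ℝ) * φ⌉ + ⌈((k:ℕ) : ℝ) * φ⌉ : ℤ) : ℝ) = ((⌈(M : ℝ) * φ⌉ + 1 : ℤ) : ℝ) := by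
        exact_mod_cast congrArg (fun z : ℤ => (z : ℝ)) heq1
      push_cast at this
      linarith
    rw [hcMval] at hgM
    -- so M ca ≤ a ca + a ck - a, i.e. k ca + a ≤ a ck
    have hkey : (k : ℝ) * (⌈((a:ℕ) : ℝ) * φ⌉ : ℝ) + a ≤ (a : ℝ) * (⌈((k:ℕ) : ℝ) * φ⌉ : ℝ) := by
      have hMr : (M : ℝ) = (a : ℝ) + k := hMak
      nlinarith [hgM]
    -- but ca > aφ and ck < kφ + 1 give k ca + a > a k φ + a > a ck
    nlinarith [hca, hck']

lemma pin_sum_ceil (φ : ℝ) (hφ : Irrational φ) :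
    ∀ fuel M : ℕ, M ≤ fuel →
      ((pinListAux φ fuel M).map (fun b : ℕ => ⌈(b : ℝ) * φ⌉)).sum = ⌈(M : ℝ) * φ⌉ := by
  intro fuel
  induction fuel with
  | zero => intro M hMf; interval_cases M; simp [pinListAux]
  | succ n ih =>
    intro M hMf
    rcases Nat.eq_zero_or_pos M with h0 | hM
    · subst h0; simp [pinListAux]
    · rw [pinListAux]
      rw [if_neg (by omega)]
      obtain ⟨haI, _⟩ := pinStep_spec φ M hM
      rw [Finset.mem_Icc] at haI
      have hrec := ih (M - pinStep φ M) (by omega)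
      simp only [List.map_cons, List.sum_cons, hrec]
      exact (ceil_split φ hφ M hM).symm

lemma coe_list_nat_real (l : List ℕ) : (l : List ℝ) = l.map (fun n : ℕ => (n : ℝ)) := by
  induction l with
  | nil => rfl
  | cons x xs ih =>
    simp only [List.pure_def, List.bind_eq_flatMap] at *
    simp [List.flatMap_cons, ih]

/-- the sum of `⌊bⱼθ⌋` over the outgoing partition of `M` is `⌊Mθ⌋`. -/
theorem pout_sum_floor (θ : ℝ) (hθ : Irrational θ) (M : ℕ) (hM : 1 ≤ M) :
    ((poutList θ M).map (fun b => ⌊(b : ℝ) * θ⌋)).sum = ⌊(M : ℝ) * θ⌋ := by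
  have key := pin_sum_ceil (-θ) hθ.neg M M (le_refl M)
  rw [poutList, pinList]
  have hmap : ∀ b : ℕ, ⌊(b : ℝ) * θ⌋ = -⌈(b : ℝ) * (-θ)⌉ := by
    intro b
    rw [show (b : ℝ) * (-θ) = -((b : ℝ) * θ) by ring, Int.ceil_neg, neg_neg]
  rw [coe_list_nat_real, List.map_map]
  have hlist : ∀ l : List ℕ,
      (l.map ((fun b : ℝ => ⌊b * θ⌋) ∘ (fun n : ℕ => (n : ℝ)))).sum =
      -((l.map (fun b : ℕ => ⌈(b : ℝ) * (-θ)⌉)).sum) := by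
    intro l
    induction l with
    | nil => simp
    | cons x xs ih =>
      simp only [List.map_cons, List.sum_cons, ih, Function.comp]
      rw [hmap x]
      ring
  rw [hlist, key, ← hmap M]
end

section
/- Let θ be irrational, M ≥ 1, write P^in_θ(M) = (a₁,…,a_k) and P^out_θ(M) = (b₁,…,b_l) nonincreasingly, let m be minimal with ∑_{j=1}^m bⱼ ≥ a₁, and set b̄ := ∑_{j=1}^m bⱼ − a₁. If k > 1, then P^out_θ(M − a₁) equals the multiset {b̄, b_{m+1}, …, b_l}. -/
open scoped Classical
open Finset

/-- membership in the set of "incoming" steps for `θ`. -/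
def inA (θ : ℝ) (a : ℕ) : Prop :=
  1 ≤ a ∧ ∀ a' ∈ Finset.Ico 1 a,
    ((⌈(a : ℝ) * θ⌉ : ℤ) : ℝ) / (a : ℝ) < ((⌈(a' : ℝ) * θ⌉ : ℤ) : ℝ) / (a' : ℝ)

lemma inA_one (θ : ℝ) : inA θ 1 := ⟨le_refl 1, by simp⟩

lemma mem_pin_filter {θ : ℝ} {M a : ℕ} :
    a ∈ ((Finset.Icc 1 M).filter (fun a : ℕ => ∀ a' ∈ Finset.Ico 1 a,
      ((⌈(a : ℝ) * θ⌉ : ℤ) : ℝ) / (a : ℝ) < ((⌈(a' : ℝ) * θ⌉ : ℤ) : ℝ) / (a' : ℝ)))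
      ↔ inA θ a ∧ a ≤ M := by
  simp only [Finset.mem_filter, Finset.mem_Icc, inA]
  tauto

lemma pinStep_spec_s13 (θ : ℝ) {M : ℕ} (hM : 1 ≤ M) :
    inA θ (pinStep θ M) ∧ pinStep θ M ≤ M ∧
      ∀ c, inA θ c → c ≤ M → c ≤ pinStep θ M := by
  classical
  set S := ((Finset.Icc 1 M).filter (fun a : ℕ => ∀ a' ∈ Finset.Ico 1 a,
      ((⌈(a : ℝ) * θ⌉ : ℤ) : ℝ) / (a : ℝ) < ((⌈(a' : ℝ) * θ⌉ : ℤ) : ℝ) / (a' : ℝ))) with hS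
  have hne : S.Nonempty := ⟨1, by rw [hS, mem_pin_filter]; exact ⟨inA_one θ, hM⟩⟩
  obtain ⟨v, hv⟩ := Finset.max_of_nonempty hne
  have hps : pinStep θ M = v := by
    rw [pinStep, ← hS, hv]; rfl
  have hmem : v ∈ S := Finset.mem_of_max hv
  rw [hS, mem_pin_filter] at hmem
  refine ⟨hps ▸ hmem.1, hps ▸ hmem.2, ?_⟩
  intro c hc hcM
  have : (c : WithBot ℕ) ≤ S.max := Finset.le_max (by rw [hS, mem_pin_filter]; exact ⟨hc, hcM⟩)
  rw [hv] at this
  exact hps ▸ WithBot.coe_le_coe.mp this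

lemma pinStep_eq (θ : ℝ) {M x : ℕ} (hM : 1 ≤ M) (hx : inA θ x) (hxM : x ≤ M)
    (hmax : ∀ c, inA θ c → c ≤ M → c ≤ x) : pinStep θ M = x := by
  obtain ⟨h1, h2, h3⟩ := pinStep_spec_s13 θ hM
  exact le_antisymm (hmax _ h1 h2) (h3 x hx hxM)


lemma irr_nat_mul {θ : ℝ} (hθ : Irrational θ) {n : ℕ} (hn : 1 ≤ n) :
    Irrational ((n : ℝ) * θ) := hθ.natCast_mul (by omega)

lemma ceil_facts {z : ℝ} (hz : Irrational z) :
    (0 : ℝ) < (⌈z⌉ : ℝ) - z ∧ (⌈z⌉ : ℝ) - z < 1 := by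
  constructor
  · have h1 : z ≤ (⌈z⌉ : ℝ) := Int.le_ceil z
    have h2 : z ≠ (⌈z⌉ : ℝ) := fun h => hz.ne_int _ h
    cases' lt_or_eq_of_le h1 with h h
    · linarith
    · exact absurd h h2
  · have := Int.ceil_lt_add_one z
    linarith

lemma floor_facts {z : ℝ} (hz : Irrational z) :
    (0 : ℝ) < z - (⌊z⌋ : ℝ) ∧ z - (⌊z⌋ : ℝ) < 1 := by
  constructor
  · have h1 : (⌊z⌋ : ℝ) ≤ z := Int.floor_le z
    have h2 : z ≠ (⌊z⌋ : ℝ) := fun h => hz.ne_int _ h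
    cases' lt_or_eq_of_le h1 with h h
    · linarith
    · exact absurd h.symm h2
  · have := Int.lt_floor_add_one z
    linarith

/-- The key lattice-basis fact: if `(a,⌈aθ⌉)` and `(b,⌊bθ⌋)` form a unimodular pair,
then any `c < a + b` has ceiling-slope at least that of `a`. -/
lemma factN (θ : ℝ) (hθ : Irrational θ) {a b c : ℕ} (ha : 1 ≤ a) (hb : 1 ≤ b) (hc : 1 ≤ c)
    (hdet : (b : ℤ) * ⌈(a : ℝ) * θ⌉ - (a : ℤ) * ⌊(b : ℝ) * θ⌋ = 1)
    (hcab : c < a + b) :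
    ⌈(a : ℝ) * θ⌉ * (c : ℤ) ≤ ⌈(c : ℝ) * θ⌉ * (a : ℤ) := by
  by_contra hcon
  push_neg at hcon
  set p : ℤ := ⌈(a : ℝ) * θ⌉ with hp
  set q : ℤ := ⌊(b : ℝ) * θ⌋ with hq
  set y : ℤ := ⌈(c : ℝ) * θ⌉ with hy
  obtain ⟨hF0, hF1⟩ := ceil_facts (irr_nat_mul hθ ha)
  obtain ⟨hG0, hG1⟩ := floor_facts (irr_nat_mul hθ hb)
  obtain ⟨hY0, hY1⟩ := ceil_facts (irr_nat_mul hθ hc)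
  rw [← hp] at hF0 hF1
  rw [← hq] at hG0 hG1
  rw [← hy] at hY0 hY1
  set s : ℤ := y * b - c * q with hs
  set t : ℤ := c * p - y * a with ht
  have ht1 : 1 ≤ t := by rw [ht, mul_comm ((c:ℕ):ℤ) p]; omega
  have hdR : (b : ℝ) * p - (a : ℝ) * q = 1 := by exact_mod_cast hdet
  have key : (y : ℝ) - (c : ℝ) * θ =
      (s : ℝ) * ((p : ℝ) - (a : ℝ) * θ) - (t : ℝ) * ((b : ℝ) * θ - (q : ℝ)) := by
    rw [hs, ht]
    push_cast
    linear_combination ((c : ℝ) * θ - (y : ℝ)) * hdR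
  have hsR : (0 : ℝ) < (s : ℝ) * ((p : ℝ) - (a : ℝ) * θ) := by
    have ht0 : (1 : ℝ) ≤ (t : ℝ) := by exact_mod_cast ht1
    nlinarith
  have hs1 : 1 ≤ s := by
    have h0 : (0 : ℝ) < (s : ℝ) := by
      rcases lt_trichotomy ((s : ℝ)) 0 with h | h | h
      · nlinarith
      · nlinarith
      · exact h
    have : (0 : ℤ) < s := by exact_mod_cast h0
    omega
  have hca : (s : ℤ) * a + t * b = c := by
    rw [hs, ht]; linear_combination (c : ℤ) * hdet
  have : (a : ℤ) + b ≤ c := by nlinarith [hca, hs1, ht1, (by exact_mod_cast ha : (1:ℤ) ≤ a), (by exact_mod_cast hb : (1:ℤ) ≤ b)]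
  omega

lemma slope_lt_iff (θ : ℝ) {x y : ℕ} (hx : 1 ≤ x) (hy : 1 ≤ y) :
    ((⌈(x : ℝ) * θ⌉ : ℤ) : ℝ) / (x : ℝ) < ((⌈(y : ℝ) * θ⌉ : ℤ) : ℝ) / (y : ℝ) ↔
      ⌈(x : ℝ) * θ⌉ * (y : ℤ) < ⌈(y : ℝ) * θ⌉ * (x : ℤ) := by
  rw [div_lt_div_iff₀ (by exact_mod_cast hx : (0:ℝ) < x) (by exact_mod_cast hy : (0:ℝ) < y)]
  exact_mod_cast Iff.rfl

lemma ceil_neg_nat (θ : ℝ) (n : ℕ) : ⌈(n : ℝ) * (-θ)⌉ = -⌊(n : ℝ) * θ⌋ := by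
  rw [mul_neg, Int.ceil_neg]

lemma floor_neg_nat (θ : ℝ) (n : ℕ) : ⌊(n : ℝ) * (-θ)⌋ = -⌈(n : ℝ) * θ⌉ := by
  rw [mul_neg, Int.floor_neg]

/-- The Stern–Brocot adjacency invariant for the current pair at level `M`. -/
def Adj (θ : ℝ) (M : ℕ) : Prop :=
  (pinStep (-θ) M : ℤ) * ⌈(pinStep θ M : ℝ) * θ⌉
      - (pinStep θ M : ℤ) * ⌊(pinStep (-θ) M : ℝ) * θ⌋ = 1
  ∧ M < pinStep θ M + pinStep (-θ) M
  ∧ (pinStep (-θ) M < pinStep θ M →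
      inA θ (pinStep θ M - pinStep (-θ) M) ∧
      ∀ c, inA θ c → c < pinStep θ M → c ≤ pinStep θ M - pinStep (-θ) M)

lemma pinStep_one (θ : ℝ) : pinStep θ 1 = 1 :=
  pinStep_eq θ le_rfl (inA_one θ) le_rfl (fun c _ h => h)

lemma Adj_one (θ : ℝ) (hθ : Irrational θ) : Adj θ 1 := by
  have h1 : pinStep θ 1 = 1 := pinStep_one θ
  have h2 : pinStep (-θ) 1 = 1 := pinStep_one (-θ)
  refine ⟨?_, ?_, ?_⟩
  · rw [h1, h2]
    have hi : Irrational ((1:ℕ) * θ) := irr_nat_mul hθ le_rfl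
    obtain ⟨hc, _⟩ := ceil_facts hi
    obtain ⟨hf, _⟩ := floor_facts hi
    have h3 : (⌊(1:ℕ) * θ⌋ : ℝ) < (⌈(1:ℕ) * θ⌉ : ℝ) := by linarith
    have h4 : ⌊((1:ℕ):ℝ) * θ⌋ < ⌈((1:ℕ):ℝ) * θ⌉ := by exact_mod_cast h3
    have h5 : ⌈((1:ℕ):ℝ) * θ⌉ ≤ ⌊((1:ℕ):ℝ) * θ⌋ + 1 := Int.ceil_le_floor_add_one _
    push_cast
    push_cast at h4 h5
    omega
  · rw [h1, h2]; omega
  · rw [h1, h2]; omega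

/-- If `M+1 < a + b`, the maximal element does not change from `N` to `N+1`. -/
lemma stepSame_pin (θ : ℝ) (hθ : Irrational θ) (N : ℕ) (hN : 1 ≤ N)
    (hAdj : Adj θ N) (hstep : N + 1 < pinStep θ N + pinStep (-θ) N) :
    pinStep θ (N + 1) = pinStep θ N := by
  obtain ⟨ha, haN, hamax⟩ := pinStep_spec_s13 θ hN
  obtain ⟨hb, hbN, hbmax⟩ := pinStep_spec_s13 (-θ) hN
  set a := pinStep θ N with hadef
  set b := pinStep (-θ) N with hbdef
  refine pinStep_eq θ (by omega) ha (by omega) ?_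
  intro c hc hcM
  rcases Nat.lt_or_ge c (N + 1) with h | h
  · exact hamax c hc (by omega)
  · -- c = N + 1 ∈ A: contradiction
    exfalso
    have hcN : c = N + 1 := by omega
    have haM : a < c := by omega
    have h1 := hc.2 a (by rw [Finset.mem_Ico]; exact ⟨ha.1, haM⟩)
    rw [slope_lt_iff θ (by omega) ha.1] at h1
    have h2 := factN θ hθ ha.1 hb.1 (show 1 ≤ c by omega) hAdj.1 (by omega)
    linarith

/-- The join step: `M = N+1 = a + b` and `Mθ` is below `p + q`; then `M` joins `A`. -/
lemma stepJoin (θ : ℝ) (hθ : Irrational θ) (N : ℕ) (hN : 1 ≤ N)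
    (hAdj : Adj θ N) (hAdj' : Adj (-θ) N)
    (hsum : N + 1 = pinStep θ N + pinStep (-θ) N)
    (hcase : ((N : ℝ) + 1) * θ <
      (⌈(pinStep θ N : ℝ) * θ⌉ : ℝ) + (⌊(pinStep (-θ) N : ℝ) * θ⌋ : ℝ)) :
    Adj θ (N + 1) ∧ Adj (-θ) (N + 1) := by
  obtain ⟨ha, haN, hamax⟩ := pinStep_spec_s13 θ hN
  obtain ⟨hb, hbN, hbmax⟩ := pinStep_spec_s13 (-θ) hN
  set a := pinStep θ N with hadef
  set b := pinStep (-θ) N with hbdef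
  set p : ℤ := ⌈(a : ℝ) * θ⌉ with hp
  set q : ℤ := ⌊(b : ℝ) * θ⌋ with hq
  have hdet : (b : ℤ) * p - (a : ℤ) * q = 1 := hAdj.1
  have ha1 := ha.1
  have hb1 := hb.1
  obtain ⟨hF0, hF1⟩ := ceil_facts (irr_nat_mul hθ ha1)
  obtain ⟨hG0, hG1⟩ := floor_facts (irr_nat_mul hθ hb1)
  rw [← hp] at hF0 hF1
  rw [← hq] at hG0 hG1
  set M := N + 1 with hMdef
  have hMab : M = a + b := hsum
  have hMR : ((M : ℕ) : ℝ) * θ = (a : ℝ) * θ + (b : ℝ) * θ := by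
    rw [hMab]; push_cast; ring
  have hcase' : (a : ℝ) * θ + (b : ℝ) * θ < (p : ℝ) + (q : ℝ) := by
    have : ((N : ℝ) + 1) * θ = (a : ℝ) * θ + (b : ℝ) * θ := by
      rw [← hMR, hMdef]; push_cast; ring
    linarith [hcase, this.symm.le]
  have hceil : ⌈((M : ℕ) : ℝ) * θ⌉ = p + q := by
    rw [Int.ceil_eq_iff, hMR]
    constructor
    · push_cast; linarith
    · push_cast; linarith
  have hfloor : ⌊((M : ℕ) : ℝ) * θ⌋ = p + q - 1 := by
    rw [Int.floor_eq_iff, hMR]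
    constructor
    · push_cast; linarith
    · push_cast; linarith
  -- M ∈ A
  have hMA : inA θ M := by
    refine ⟨by omega, ?_⟩
    intro a' ha'
    rw [Finset.mem_Ico] at ha'
    rw [slope_lt_iff θ (by omega) ha'.1, hceil]
    have hf := factN θ hθ ha1 hb1 ha'.1 hdet (by omega)
    rw [← hp] at hf
    have ha'1 : (1 : ℤ) ≤ (a' : ℤ) := by exact_mod_cast ha'.1
    have haZ : (1 : ℤ) ≤ (a : ℤ) := by exact_mod_cast ha1
    have hbZ : (1 : ℤ) ≤ (b : ℤ) := by exact_mod_cast hb1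
    have hMZ : ((M : ℕ) : ℤ) = (a : ℤ) + b := by exact_mod_cast hMab
    rw [hMZ]
    nlinarith [hf, hdet, ha'1, haZ, hbZ]
  have hstepA : pinStep θ M = M :=
    pinStep_eq θ (by omega) hMA le_rfl (fun c _ h => h)
  have hstepB : pinStep (-θ) M = b := by
    refine pinStep_eq (-θ) (by omega) hb (by omega) ?_
    intro c hc hcM
    rcases Nat.lt_or_ge c M with h | h
    · exact hbmax c hc (by omega)
    · exfalso
      have hcN : c = M := by omega
      have hbM : b < c := by omega
      have h1 := hc.2 b (by rw [Finset.mem_Ico]; exact ⟨hb1, hbM⟩)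
      rw [slope_lt_iff (-θ) (by omega) hb1, ceil_neg_nat, ceil_neg_nat, ← hq] at h1
      have hfc : ⌊(c : ℝ) * θ⌋ = p + q - 1 := by rw [hcN]; exact hfloor
      rw [hfc] at h1
      have hMZ : ((c : ℕ) : ℤ) = (a : ℤ) + b := by rw [hcN]; exact_mod_cast hMab
      rw [hMZ] at h1
      have hbZ : (1 : ℤ) ≤ (b : ℤ) := by exact_mod_cast hb1
      nlinarith [h1, hdet, hbZ]
  constructor
  · refine ⟨?_, ?_, ?_⟩
    · rw [hstepA, hstepB, hceil, ← hq]
      have hMZ : ((M : ℕ) : ℤ) = (a : ℤ) + b := by exact_mod_cast hMab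
      rw [hMZ]; linarith [hdet]
    · rw [hstepA, hstepB]; omega
    · rw [hstepA, hstepB]
      intro _
      have hMb : M - b = a := by omega
      rw [hMb]
      exact ⟨ha, fun c hc hcM => hamax c hc (by omega)⟩
  · rw [Adj, neg_neg, hstepA, hstepB]
    refine ⟨?_, ?_, ?_⟩
    · rw [ceil_neg_nat, floor_neg_nat, hceil, ← hq]
      have hMZ : ((M : ℕ) : ℤ) = (a : ℤ) + b := by exact_mod_cast hMab
      rw [hMZ]; linarith [hdet]
    · omega
    · intro h; exfalso; omega


theorem AdjAll : ∀ M : ℕ, 1 ≤ M → ∀ θ : ℝ, Irrational θ → Adj θ M := by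
  intro M
  induction M with
  | zero => omega
  | succ N IH =>
    intro _ θ hθ
    rcases Nat.eq_zero_or_pos N with h0 | hN1
    · subst h0; exact Adj_one θ hθ
    · have hAdj := IH hN1 θ hθ
      have hAdj' := IH hN1 (-θ) hθ.neg
      by_cases hlt : N + 1 < pinStep θ N + pinStep (-θ) N
      · have e1 : pinStep θ (N+1) = pinStep θ N := stepSame_pin θ hθ N hN1 hAdj hlt
        have e2 : pinStep (-θ) (N+1) = pinStep (-θ) N := by
          refine stepSame_pin (-θ) hθ.neg N hN1 hAdj' ?_
          rw [neg_neg]; omega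
        rw [Adj, e1, e2]
        exact ⟨hAdj.1, hlt, hAdj.2.2⟩
      · have hsum : N + 1 = pinStep θ N + pinStep (-θ) N := by
          have := hAdj.2.1; omega
        set p : ℤ := ⌈(pinStep θ N : ℝ) * θ⌉ with hp
        set q : ℤ := ⌊(pinStep (-θ) N : ℝ) * θ⌋ with hq
        rcases lt_trichotomy (((N : ℝ) + 1) * θ) ((p : ℝ) + (q : ℝ)) with hc | hc | hc
        · exact (stepJoin θ hθ N hN1 hAdj hAdj' hsum hc).1
        · exfalso
          have hirr : Irrational (((N + 1 : ℕ) : ℝ) * θ) := irr_nat_mul hθ (by omega)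
          exact hirr.ne_int (p + q) (by push_cast; push_cast at hc; linarith)
        · have hc' : ((N : ℝ) + 1) * (-θ) <
              (⌈(pinStep (-θ) N : ℝ) * (-θ)⌉ : ℝ) + (⌊(pinStep (- -θ) N : ℝ) * (-θ)⌋ : ℝ) := by
            rw [neg_neg, ceil_neg_nat, floor_neg_nat]
            push_cast
            linarith
          have hres := stepJoin (-θ) hθ.neg N hN1 hAdj' (by rw [neg_neg]; exact hAdj)
            (by rw [neg_neg]; omega) hc'
          have h2 := hres.2
          rw [neg_neg] at h2
          exact h2

lemma predB (θ : ℝ) (hθ : Irrational θ) {M : ℕ} (hM : 1 ≤ M)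
    (h : pinStep θ M < pinStep (-θ) M) :
    inA (-θ) (pinStep (-θ) M - pinStep θ M) ∧
      ∀ c, inA (-θ) c → c < pinStep (-θ) M → c ≤ pinStep (-θ) M - pinStep θ M := by
  have h2 := (AdjAll M hM (-θ) hθ.neg).2.2
  rw [neg_neg] at h2
  exact h2 h


lemma pinListAux_eq (θ : ℝ) : ∀ f N, N ≤ f → pinListAux θ f N = pinListAux θ N N := by
  intro f
  induction f using Nat.strong_induction_on with
  | _ f IH =>
    intro N hNf
    cases f with
    | zero =>
      have h : N = 0 := by omega
      subst h; rfl
    | succ g =>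
      by_cases h0 : N = 0
      · subst h0; simp [pinListAux]
      · have h1 : 1 ≤ N := by omega
        have hstep1 : 1 ≤ pinStep θ N := (pinStep_spec_s13 θ h1).1.1
        obtain ⟨N', rfl⟩ : ∃ N', N = N' + 1 := ⟨N - 1, by omega⟩
        show pinListAux θ (g+1) (N'+1) = pinListAux θ (N'+1) (N'+1)
        rw [pinListAux, pinListAux, if_neg h0, if_neg h0]
        congr 1
        rw [IH g (by omega) _ (by omega), IH N' (by omega) _ (by omega)]

lemma pinList_cons (θ : ℝ) {M : ℕ} (hM : 1 ≤ M) :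
    pinList θ M = pinStep θ M :: pinList θ (M - pinStep θ M) := by
  obtain ⟨N', rfl⟩ : ∃ N', M = N' + 1 := ⟨M - 1, by omega⟩
  have hstep1 : 1 ≤ pinStep θ (N' + 1) := (pinStep_spec_s13 θ hM).1.1
  show pinListAux θ (N'+1) (N'+1) = _
  rw [pinListAux, if_neg (by omega)]
  congr 1
  exact pinListAux_eq θ N' _ (by omega)

lemma pinList_nil (θ : ℝ) : pinList θ 0 = [] := rfl

lemma pinList_headI (θ : ℝ) {M : ℕ} (hM : 1 ≤ M) :
    (pinList θ M).headI = pinStep θ M := by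
  rw [pinList_cons θ hM]; rfl

lemma pinList_two_le_length (θ : ℝ) {M : ℕ} (hM : 1 ≤ M) :
    2 ≤ (pinList θ M).length ↔ pinStep θ M < M := by
  obtain ⟨h1, h2, _⟩ := pinStep_spec_s13 θ hM
  rw [pinList_cons θ hM, List.length_cons]
  constructor
  · intro h
    by_contra hc
    have : pinStep θ M = M := by omega
    rw [this, Nat.sub_self, pinList_nil] at h
    simp at h
  · intro h
    have h3 : 1 ≤ M - pinStep θ M := by omega
    rw [pinList_cons θ h3]
    simp

theorem main_aux (θ : ℝ) (hθ : Irrational θ) :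
    ∀ M : ℕ, 1 ≤ M → ∀ m : ℕ,
      m ≤ (poutList θ M).length →
      pinStep θ M ≤ ((poutList θ M).take m).sum →
      (∀ m' < m, ((poutList θ M).take m').sum < pinStep θ M) →
      pinStep θ M < M →
      (↑(poutList θ (M - pinStep θ M)) : Multiset ℕ) =
        (((poutList θ M).take m).sum - pinStep θ M) ::ₘ ↑((poutList θ M).drop m) := by
  intro M
  induction M using Nat.strong_induction_on with
  | _ M SIH =>
    intro hM m hml hm1 hm2 hk
    set a := pinStep θ M with hadef
    set b := pinStep (-θ) M with hbdef
    obtain ⟨haA, haM, hamax⟩ := pinStep_spec_s13 θ hM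
    obtain ⟨hbB, hbM, hbmax⟩ := pinStep_spec_s13 (-θ) hM
    have ha1 : 1 ≤ a := haA.1
    have hb1 : 1 ≤ b := hbB.1
    have hAdj := AdjAll M hM θ hθ
    have hab : M < a + b := hAdj.2.1
    have hpout : poutList θ M = b :: poutList θ (M - b) := pinList_cons (-θ) hM
    have hm0 : 1 ≤ m := by
      by_contra h
      have hm00 : m = 0 := by omega
      rw [hm00] at hm1
      simp at hm1
      omega
    by_cases hmeq : m = 1
    · -- m = 1 : b ≥ a, and in fact b > a
      subst hmeq
      rw [hpout] at hm1
      simp at hm1   -- a ≤ b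
      have hne : a ≠ b := by
        intro h
        have hd := hAdj.1
        rw [← hadef, ← hbdef, ← h] at hd
        obtain ⟨hc1, _⟩ := ceil_facts (irr_nat_mul hθ ha1)
        obtain ⟨hf1, _⟩ := floor_facts (irr_nat_mul hθ ha1)
        have hpq : ⌊(a:ℝ)*θ⌋ < ⌈(a:ℝ)*θ⌉ := by
          have h5 : (⌊(a:ℝ)*θ⌋:ℝ) < (⌈(a:ℝ)*θ⌉:ℝ) := by linarith
          exact_mod_cast h5
        have ha1' : a = 1 := by
          by_contra hne1
          have haZ2 : (2:ℤ) ≤ (a:ℤ) := by exact_mod_cast (by omega : 2 ≤ a)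
          nlinarith [hd]
        omega
      have hba : a < b := by omega
      obtain ⟨hpredB, hpredBmax⟩ := predB θ hθ hM hba
      have hMa1 : 1 ≤ M - a := by omega
      have hstep' : pinStep (-θ) (M - a) = b - a := by
        refine pinStep_eq (-θ) hMa1 hpredB (by omega) ?_
        intro c hc hcMa
        exact hpredBmax c hc (by omega)
      have hcons2 : poutList θ (M - a) = (b - a) :: poutList θ (M - a - (b - a)) := by
        have := pinList_cons (-θ) hMa1
        rw [hstep'] at this
        exact this
      have heq : M - a - (b - a) = M - b := by omega
      rw [hcons2, heq, hpout]
      simp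
    · -- m ≥ 2
      have hm2' : 2 ≤ m := by omega
      have hbla : b < a := by
        have := hm2 1 (by omega)
        rw [hpout] at this
        simpa using this
      obtain ⟨hpredA, hpredAmax⟩ := hAdj.2.2 hbla
      have hMb1 : 1 ≤ M - b := by omega
      have hstepA' : pinStep θ (M - b) = a - b := by
        refine pinStep_eq θ hMb1 hpredA (by omega) ?_
        intro c hc hcMb
        exact hpredAmax c hc (by omega)
      have hIH := SIH (M - b) (by omega) hMb1 (m - 1)
      rw [hstepA'] at hIH
      obtain ⟨m', rfl⟩ : ∃ m', m = m' + 1 := ⟨m - 1, by omega⟩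
      simp only [Nat.add_sub_cancel] at hIH
      have htake : ((poutList θ M).take (m' + 1)).sum = b + ((poutList θ (M - b)).take m').sum := by
        rw [hpout, List.take_succ_cons, List.sum_cons]
      have hdrop : (poutList θ M).drop (m' + 1) = (poutList θ (M - b)).drop m' := by
        rw [hpout, List.drop_succ_cons]
      have hml' : m' ≤ (poutList θ (M - b)).length := by
        rw [hpout, List.length_cons] at hml
        omega
      have hm1' : a - b ≤ ((poutList θ (M - b)).take m').sum := by
        rw [htake] at hm1
        omega
      have hm2'' : ∀ m'' < m', ((poutList θ (M - b)).take m'').sum < a - b := by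
        intro m'' hm''
        have := hm2 (m'' + 1) (by omega)
        rw [hpout, List.take_succ_cons, List.sum_cons] at this
        omega
      have hres := hIH hml' hm1' hm2'' (by omega)
      have heq2 : M - b - (a - b) = M - a := by omega
      rw [heq2] at hres
      rw [hres, htake, hdrop]
      have hfin : ((poutList θ (M - b)).take m').sum - (a - b) =
          b + ((poutList θ (M - b)).take m').sum - a := by omega
      rw [hfin]

/-- with notation as above and `k > 1`, the outgoing partition of
`M − a₁` is the multiset `{b̄, b_{m+1}, …, b_l}`. -/
theorem pout_recursion (θ : ℝ) (hθ : Irrational θ) (M : ℕ) (hM : 1 ≤ M) (m : ℕ)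
    (hml : m ≤ (poutList θ M).length)
    (hm1 : (pinList θ M).headI ≤ (((poutList θ M).take m).sum))
    (hm2 : ∀ m' < m, (((poutList θ M).take m').sum) < (pinList θ M).headI)
    (hk : 2 ≤ (pinList θ M).length) :
    (↑(poutList θ (M - (pinList θ M).headI)) : Multiset ℕ) =
      (((poutList θ M).take m).sum - (pinList θ M).headI) ::ₘ
        (↑((poutList θ M).drop m) : Multiset ℕ) := by
  have hhead : (pinList θ M).headI = pinStep θ M := pinList_headI θ hM
  rw [hhead] at hm1 hm2 ⊢
  have hk' : pinStep θ M < M := (pinList_two_le_length θ hM).mp hk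
  exact main_aux θ hθ M hM m hml hm1 hm2 hk'
end
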